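/- Let X be the set of rational numbers in [0,1] and G the group of all homeomorphisms of X (with its subspace topology). Then the finitary coarse space X_G is indiscrete but not λ-tight. -/

import Mathlib

open Set

/-- A coarse structure on a set `X`. -/
structure CoarseStructure (X : Type*) where
  sets : Set (Set (X × X))
  diagonal_mem : ∀ E ∈ sets, ∀ x : X, (x, x) ∈ E
  comp_mem : ∀ E ∈ sets, ∀ E' ∈ sets,
    {q : X × X | ∃ z : X, (q.1, z) ∈ E ∧ (z, q.2) ∈ E'} ∈ sets
  inv_mem : ∀ E ∈ sets, {q : X × X | (q.2, q.1) ∈ E} ∈ sets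
  subset_mem : ∀ E ∈ sets, ∀ E', E' ⊆ E → (∀ x : X, (x, x) ∈ E') → E' ∈ sets
  covers : ⋃₀ sets = Set.univ

/-- The ball `E[A]`. -/
def ball {X : Type*} (E : Set (X × X)) (A : Set X) : Set X := {y | ∃ a ∈ A, (a, y) ∈ E}

/-- A bounded subset of a coarse space. -/
def CoarseStructure.Bounded {X : Type*} (C : CoarseStructure X) (B : Set X) : Prop :=
  ∃ E ∈ C.sets, ∃ x : X, B ⊆ ball E {x}

/-- A finitary coarse space: uniformly finite balls. -/
def CoarseStructure.Finitary {X : Type*} (C : CoarseStructure X) : Prop :=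
  ∀ E ∈ C.sets, ∃ n : ℕ, ∀ x : X, (ball E {x}).Finite ∧ (ball E {x}).ncard < n

/-- The set `X^♯` of ultrafilters all of whose members are unbounded. -/
def CoarseStructure.Sharp {X : Type*} (C : CoarseStructure X) : Set (Ultrafilter X) :=
  {p | ∀ P ∈ p, ¬ C.Bounded P}

/-- The parallelity relation on ultrafilters. -/
def CoarseStructure.Parallel {X : Type*} (C : CoarseStructure X) (p q : Ultrafilter X) : Prop :=
  ∃ E ∈ C.sets, ∀ P ∈ p, ball E P ∈ q

/-- The entourage determined by a set of permutations. -/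
def entourage {X : Type*} (F : Set (Equiv.Perm X)) : Set (X × X) :=
  {q | ∃ g ∈ F, q.2 = g q.1}

/-- The finitary coarse structure `X_G` determined by a group `G` of permutations of `X`:
its entourages are the diagonal-containing subsets of `{(x,gx) : x ∈ X, g ∈ F}`
for finite `F ⊆ G` with `id ∈ F`. -/
def XGsets {X : Type*} (G : Subgroup (Equiv.Perm X)) : Set (Set (X × X)) :=
  {E | (∀ x : X, (x, x) ∈ E) ∧ ∃ F : Finset (Equiv.Perm X),
    (1 : Equiv.Perm X) ∈ F ∧ ↑F ⊆ (G : Set (Equiv.Perm X)) ∧ E ⊆ entourage ↑F}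

/-- A free ultrafilter. -/
def IsFree {X : Type*} (p : Ultrafilter X) : Prop := (p : Filter X) ≤ Filter.cofinite

/-- `X*`, the space of free ultrafilters with the Stone topology. -/
def FreeUF (X : Type*) : Type _ := {p : Ultrafilter X // IsFree p}

instance (X : Type*) : TopologicalSpace (FreeUF X) :=
  instTopologicalSpaceSubtype

/-- The orbit `Gp` of an ultrafilter under the induced action `gp = {gP : P ∈ p}`. -/
def ufOrbit {X : Type*} (G : Subgroup (Equiv.Perm X)) (p : Ultrafilter X) :
    Set (Ultrafilter X) :=
  {q | ∃ g ∈ G, q = Ultrafilter.map (⇑g) p}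

/-- The `p`-companion `Δ_p(A) = A* ∩ Gp`. -/
def compan {X : Type*} (G : Subgroup (Equiv.Perm X)) (p : Ultrafilter X) (A : Set X) :
    Set (Ultrafilter X) :=
  {q | A ∈ q ∧ q ∈ ufOrbit G p}

/-- Large subsets of `X_G`. -/
def IsLarge {X : Type*} (G : Subgroup (Equiv.Perm X)) (A : Set X) : Prop :=
  ∃ E ∈ XGsets G, ball E A = Set.univ

/-- Thick subsets of `X_G`. -/
def IsThick {X : Type*} (G : Subgroup (Equiv.Perm X)) (A : Set X) : Prop :=
  ∀ E ∈ XGsets G, ∃ a ∈ A, ball E {a} ⊆ A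

/-- Thin (discrete) subsets of `X_G`. -/
def IsThin {X : Type*} (G : Subgroup (Equiv.Perm X)) (A : Set X) : Prop :=
  ∀ E ∈ XGsets G, ∃ B : Set X, B.Finite ∧ ∀ a ∈ A \ B, ball E {a} ∩ A = {a}

/-- Sparse subsets of `X_G`. -/
def IsSparse {X : Type*} (G : Subgroup (Equiv.Perm X)) (A : Set X) : Prop :=
  ∀ p : Ultrafilter X, IsFree p → (compan G p A).Finite

/-- Scattered subsets of `X_G`. -/
def IsScattered {X : Type*} (G : Subgroup (Equiv.Perm X)) (A : Set X) : Prop :=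
  ∀ Y ⊆ A, Y.Infinite →
    ∃ p : Ultrafilter X, IsFree p ∧ Y ∈ p ∧ (compan G p Y).Finite

/-- Close subsets of a coarse space. -/
def CoarseStructure.Close {X : Type*} (C : CoarseStructure X) (A B : Set X) : Prop :=
  ∃ E ∈ C.sets, A ⊆ ball E B ∧ B ⊆ ball E A

/-- Close subsets of `X_G`. -/
def CloseG {X : Type*} (G : Subgroup (Equiv.Perm X)) (A B : Set X) : Prop :=
  ∃ E ∈ XGsets G, A ⊆ ball E B ∧ B ⊆ ball E A

/-- Linked subsets of `X_G`. -/
def LinkedG {X : Type*} (G : Subgroup (Equiv.Perm X)) (A B : Set X) : Prop :=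
  (A.Finite ∧ B.Finite) ∨
    ∃ A' ⊆ A, ∃ B' ⊆ B, A'.Infinite ∧ B'.Infinite ∧ CloseG G A' B'


open Set

/-- The `n`-th block `{g_0^{ε_0} ⋯ g_n^{ε_n} x_n : ε_i ∈ {0,1}}`. -/
def pwBlock {X : Type*} (g : ℕ → Equiv.Perm X) (x : ℕ → X) (n : ℕ) : Set X :=
  {y | ∃ ε : Fin (n + 1) → Bool,
    y = ((List.ofFn fun i : Fin (n + 1) =>
      (g i) ^ (if ε i then 1 else 0)).prod : Equiv.Perm X) (x n)}

/-- A piece-wise shifted FP-set determined by the group `G`. -/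
def IsPWShiftedFP {X : Type*} (G : Subgroup (Equiv.Perm X)) (Y : Set X) : Prop :=
  ∃ g : ℕ → Equiv.Perm X, ∃ x : ℕ → X,
    (∀ n, g n ∈ G) ∧
    (∀ m n, m ≠ n → Disjoint (pwBlock g x m) (pwBlock g x n)) ∧
    (∀ n, (pwBlock g x n).ncard = 2 ^ (n + 1)) ∧
    Y = ⋃ n, pwBlock g x n

/-- The group of all self-homeomorphisms of a topological space, as a subgroup
of the permutation group. -/
def homeoSubgroup (X : Type*) [TopologicalSpace X] : Subgroup (Equiv.Perm X) where
  carrier := {g | Continuous g ∧ Continuous g.symm}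
  one_mem' := ⟨continuous_id, continuous_id⟩
  mul_mem' := by
    rintro a b ⟨ha1, ha2⟩ ⟨hb1, hb2⟩
    refine ⟨?_, ?_⟩
    · simpa [Equiv.Perm.mul_def, Equiv.coe_trans] using ha1.comp hb1
    · simpa [Equiv.Perm.mul_def, Equiv.symm_trans_apply] using (hb2.comp ha2 : _)
  inv_mem' := by
    rintro a ⟨ha1, ha2⟩
    exact ⟨ha2, by first | simpa [Equiv.Perm.inv_def] using ha1 | exact ha1⟩


/-- The parallelity relation on ultrafilters over the coarse space `X_G`. -/
def ParallelG {X : Type*} (G : Subgroup (Equiv.Perm X)) (p q : Ultrafilter X) : Prop :=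
  ∃ E ∈ XGsets G, ∀ P ∈ p, ball E P ∈ q

/-- Linked subsets of a coarse space. -/
def CoarseStructure.Linked {X : Type*} (C : CoarseStructure X) (A B : Set X) : Prop :=
  (C.Bounded A ∧ C.Bounded B) ∨
    ∃ A' ⊆ A, ∃ B' ⊆ B, ¬ C.Bounded A' ∧ ¬ C.Bounded B' ∧ C.Close A' B'

/-- The orbit `Gp` viewed as a subset of the space `X*` of free ultrafilters. -/
def freeOrbit {X : Type*} (G : Subgroup (Equiv.Perm X)) (p : Ultrafilter X) :
    Set (FreeUF X) :=
  {q | q.1 ∈ ufOrbit G p}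

namespace S18
open Filter Topology

abbrev XX := ↥(Set.Icc (0:ℚ) 1)

noncomputable def ι (x : XX) : ℝ := ((x : ℚ) : ℝ)

lemma ι_inj : Function.Injective ι := by
  intro x y h
  have : ((x:ℚ):ℝ) = ((y:ℚ):ℝ) := h
  exact Subtype.ext (by exact_mod_cast this)

lemma continuous_ι : Continuous ι := by
  unfold ι; continuity

lemma dist_eq (x y : XX) : dist x y = |ι x - ι y| := by
  rw [Subtype.dist_eq, Rat.dist_eq]; rfl

/-- membership in `homeoSubgroup` unfolded -/
lemma mem_homeo {g : Equiv.Perm XX} (hg : g ∈ homeoSubgroup XX) :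
    Continuous ⇑g ∧ Continuous ⇑g.symm := hg

/-- "no accumulation point" predicate -/
def Disc (S : Set XX) : Prop := ∀ x : XX, ∃ U ∈ 𝓝 x, U ∩ S ⊆ {x}

lemma Disc.mono {S S' : Set XX} (h : Disc S) (hsub : S' ⊆ S) : Disc S' := by
  intro x
  obtain ⟨U, hU, hUS⟩ := h x
  exact ⟨U, hU, fun y hy => hUS ⟨hy.1, hsub hy.2⟩⟩

lemma Disc.union {S S' : Set XX} (h : Disc S) (h' : Disc S') : Disc (S ∪ S') := by
  intro x
  obtain ⟨U, hU, hUS⟩ := h x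
  obtain ⟨V, hV, hVS⟩ := h' x
  refine ⟨U ∩ V, Filter.inter_mem hU hV, ?_⟩
  rintro y ⟨⟨hyU, hyV⟩, hyS | hyS⟩
  · exact hUS ⟨hyU, hyS⟩
  · exact hVS ⟨hyV, hyS⟩

lemma disc_empty : Disc (∅ : Set XX) := fun x => ⟨univ, Filter.univ_mem, by simp⟩

lemma Disc.image {S : Set XX} (h : Disc S) (g : Equiv.Perm XX)
    (hg : g ∈ homeoSubgroup XX) : Disc (⇑g '' S) := by
  intro x
  obtain ⟨U, hU, hUS⟩ := h (g.symm x)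
  refine ⟨⇑g.symm ⁻¹' U, (mem_homeo hg).2.continuousAt.preimage_mem_nhds hU, ?_⟩
  rintro y ⟨hyU, s, hsS, rfl⟩
  have : s ∈ U ∩ S := ⟨by simpa using hyU, hsS⟩
  have hs := hUS this
  simp only [mem_singleton_iff] at hs ⊢
  rw [hs]
  simp

lemma disc_biUnion (F : Finset (Equiv.Perm XX)) (B' : Set XX) (hB' : Disc B')
    (hF : ↑F ⊆ (homeoSubgroup XX : Set (Equiv.Perm XX))) :
    Disc (⋃ g ∈ F, ⇑g '' B') := by
  classical
  induction F using Finset.induction_on with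
  | empty => simpa using disc_empty
  | @insert a s ha ih =>
    rw [Finset.set_biUnion_insert]
    exact (hB'.image a (hF (Finset.mem_insert_self a s))).union
      (ih fun g hg => hF (Finset.mem_insert_of_mem hg))

end S18

namespace S18
open Filter Topology Set

noncomputable def alf : ℝ := Real.sqrt 2 / 2

lemma alf_irr : Irrational alf := by
  have := irrational_sqrt_two
  unfold alf
  rw [show (2:ℝ) = ((2:ℚ):ℝ) by norm_num]
  exact Irrational.div_ratCast this (by norm_num)

lemma sqrt2_lt : Real.sqrt 2 < 2 := by
  nlinarith [Real.sq_sqrt (by norm_num : (0:ℝ) ≤ 2), Real.sqrt_nonneg 2]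

lemma sqrt2_gt : 1 < Real.sqrt 2 := by
  nlinarith [Real.sq_sqrt (by norm_num : (0:ℝ) ≤ 2), Real.sqrt_nonneg 2]

lemma alf_pos : 0 < alf := by unfold alf; positivity

lemma alf_lt_one : alf < 1 := by unfold alf; linarith [sqrt2_lt]

noncomputable def bq (n : ℕ) : ℚ := (⌊alf * 2 ^ n⌋ : ℚ) / 2 ^ n

lemma bq_le (n : ℕ) : (bq n : ℝ) ≤ alf := by
  have h1 : ((⌊alf * 2 ^ n⌋ : ℝ)) ≤ alf * 2 ^ n := Int.floor_le _
  have h2 : (0:ℝ) < 2 ^ n := by positivity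
  rw [bq]
  push_cast
  rw [div_le_iff₀ h2]
  exact h1

lemma bq_gt (n : ℕ) : alf - (2 ^ n)⁻¹ < (bq n : ℝ) := by
  have h1 : alf * 2 ^ n - 1 < ((⌊alf * 2 ^ n⌋ : ℝ)) := Int.sub_one_lt_floor _
  have h2 : (0:ℝ) < 2 ^ n := by positivity
  rw [bq]
  push_cast
  rw [lt_div_iff₀ h2]
  have h3 : ((2:ℝ)^n)⁻¹ * 2^n = 1 := inv_mul_cancel₀ (ne_of_gt h2)
  have h4 : (alf - (2^n)⁻¹) * 2^n = alf * 2^n - (2^n)⁻¹ * 2^n := sub_mul _ _ _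
  rw [h4, h3]
  linarith

lemma bq_lt (n : ℕ) : (bq n : ℝ) < alf :=
  lt_of_le_of_ne (bq_le n) (fun h => alf_irr ⟨bq n, h⟩)

lemma bq_mem (n : ℕ) : bq n ∈ Set.Icc (0:ℚ) 1 := by
  constructor
  · have h0 : (0:ℤ) ≤ ⌊alf * 2^n⌋ := Int.floor_nonneg.mpr (mul_nonneg (le_of_lt alf_pos) (by positivity))
    unfold bq
    exact div_nonneg (by exact_mod_cast h0) (by positivity)
  · have : (bq n : ℝ) ≤ 1 := le_of_lt (lt_trans (bq_lt n) alf_lt_one)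
    exact_mod_cast this

noncomputable def belm (n : ℕ) : XX := ⟨bq n, bq_mem n⟩

noncomputable def Bset : Set XX := Set.range belm

lemma Bset_infinite : Bset.Infinite := by
  intro hfin
  obtain ⟨m, hmB, hmax'⟩ := Set.exists_max_image Bset ι hfin ⟨belm 0, Set.mem_range_self 0⟩
  have hmax : ∀ a' ∈ Bset, ι m ≤ ι a' → ι m = ι a' := fun a' ha' h => le_antisymm h (hmax' a' ha')
  obtain ⟨N, hN⟩ := hmB
  have hm_lt : ι m < alf := by rw [← hN]; exact bq_lt N
  obtain ⟨n, hn⟩ := pow_unbounded_of_one_lt (alf - ι m)⁻¹ (by norm_num : (1:ℝ) < 2)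
  have hpos : 0 < alf - ι m := by linarith
  have h1 : ((2:ℝ) ^ n)⁻¹ < alf - ι m := by
    rw [inv_lt_comm₀ (by positivity) hpos]
    exact hn
  have h2 : ι m < ι (belm n) := by
    have := bq_gt n
    show ι m < (bq n : ℝ)
    linarith
  have := hmax (belm n) (Set.mem_range_self n) (le_of_lt h2)
  rw [this] at h2
  exact lt_irrefl _ h2

lemma disc_Bset : Disc Bset := by
  intro x
  have hxa : ι x ≠ alf := fun h => alf_irr ⟨(x:ℚ), h⟩
  set δ := |ι x - alf| with hδ
  have hδpos : 0 < δ := abs_pos.mpr (sub_ne_zero.mpr hxa)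
  obtain ⟨N, hN⟩ := pow_unbounded_of_one_lt (δ / 2)⁻¹ (by norm_num : (1:ℝ) < 2)
  set T := (Bset ∩ Metric.ball x (δ/2)) \ {x} with hT
  have hTfin : T.Finite := by
    apply Set.Finite.subset ((Set.finite_Iic N).image belm)
    rintro y ⟨⟨⟨n, rfl⟩, hyb⟩, -⟩
    refine ⟨n, ?_, rfl⟩
    have hd : |(bq n : ℝ) - ι x| < δ/2 := by
      have := Metric.mem_ball.mp hyb
      rwa [dist_eq] at this
    have h1 : δ/2 < |(bq n : ℝ) - alf| := by
      have htri : |ι x - alf| ≤ |ι x - (bq n:ℝ)| + |(bq n:ℝ) - alf| := abs_sub_le _ _ _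
      have h2 : |ι x - (bq n:ℝ)| = |(bq n:ℝ) - ι x| := abs_sub_comm _ _
      rw [h2] at htri
      rw [← hδ] at htri
      linarith
    have h2 : |(bq n : ℝ) - alf| < (2 ^ n)⁻¹ := by
      have ha := bq_gt n
      have hb := bq_lt n
      rw [abs_sub_lt_iff]
      constructor <;> [linarith; linarith [show (0:ℝ) < (2^n)⁻¹ by positivity]]
    have : ((2:ℝ)^N)⁻¹ < (2^n)⁻¹ := by
      have hNi : ((2:ℝ)^N)⁻¹ < δ/2 := by
        rw [inv_lt_comm₀ (by positivity) (by linarith)]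
        exact hN
      linarith
    have : (2:ℝ)^n < 2^N := by
      rw [inv_lt_inv₀ (by positivity) (by positivity)] at this
      exact this
    simp only [Set.mem_Iic]
    exact le_of_lt (pow_lt_pow_iff_right₀ (by norm_num : (1:ℝ) < 2) |>.mp this)
  refine ⟨Metric.ball x (δ/2) \ T, ?_, ?_⟩
  · apply IsOpen.mem_nhds (Metric.isOpen_ball.sdiff hTfin.isClosed)
    exact ⟨Metric.mem_ball_self (by linarith), fun h => h.2 rfl⟩
  · rintro y ⟨⟨hyb, hyT⟩, hyB⟩
    by_contra hyx
    exact hyT ⟨⟨hyB, hyb⟩, hyx⟩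

end S18

namespace S18
open Filter Topology Set

def aelm (n : ℕ) : XX := ⟨((n:ℚ)+2)⁻¹, by
  constructor
  · positivity
  · rw [inv_le_one_iff₀]; right
    have : (0:ℚ) ≤ (n:ℚ) := Nat.cast_nonneg n
    linarith⟩

def Aset : Set XX := Set.range aelm

lemma aelm_inj : Function.Injective aelm := by
  intro n m h
  have h1 : ((n:ℚ)+2)⁻¹ = ((m:ℚ)+2)⁻¹ := congrArg Subtype.val h
  field_simp at h1
  have h2 : m + 2 = n + 2 := by exact_mod_cast h1
  omega

lemma Aset_infinite : Aset.Infinite := Set.infinite_range_of_injective aelm_inj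

lemma key_no_disc (S : Set XX) (hS : Disc S) (A' : Set XX) (hA' : A' ⊆ Aset)
    (hinf : A'.Infinite) : ¬ A' ⊆ S := by
  intro hsub
  set z : XX := ⟨0, by norm_num⟩ with hz
  obtain ⟨U, hU, hUS⟩ := hS z
  obtain ⟨ε, hε, hball⟩ := Metric.mem_nhds_iff.mp hU
  -- the elements of Aset with value ≥ ε form a finite set
  obtain ⟨N, hN⟩ := pow_unbounded_of_one_lt ε⁻¹ (by norm_num : (1:ℝ) < 2)
  have hbig : {y ∈ Aset | ε ≤ ι y}.Finite := by
    apply Set.Finite.subset ((Set.finite_Iic (2^N)).image aelm)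
    rintro y ⟨⟨n, rfl⟩, hy⟩
    refine ⟨n, ?_, rfl⟩
    simp only [Set.mem_Iic]
    by_contra hn
    push_neg at hn
    have hv : ι (aelm n) = (((n:ℚ)+2:ℚ):ℝ)⁻¹ := by
      show (((((n:ℚ)+2)⁻¹ : ℚ)):ℝ) = _
      push_cast
      ring
    have h2 : ((n:ℝ)+2) > 2^N := by
      have : (2:ℝ)^N < (n:ℝ) := by exact_mod_cast hn
      linarith
    have h3 : ι (aelm n) < ε := by
      rw [hv]
      push_cast
      have hεi : ε⁻¹ < 2^N := hN
      have : ((n:ℝ)+2)⁻¹ < (2^N : ℝ)⁻¹ := by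
        apply inv_strictAnti₀ (by positivity) h2
      have h5 : ((2:ℝ)^N)⁻¹ < ε := by
        rw [inv_lt_comm₀ (by positivity) hε]
        exact hN
      linarith
    linarith
  -- so A' has a point with small value
  have : ¬ A' ⊆ {y ∈ Aset | ε ≤ ι y} := fun hc => hinf (hbig.subset hc)
  obtain ⟨a, haA', hasmall⟩ := Set.not_subset.mp this
  have haA : a ∈ Aset := hA' haA'
  have hsmall : ι a < ε := by
    by_contra hc
    exact hasmall ⟨haA, not_lt.mp hc⟩
  obtain ⟨n, rfl⟩ := haA
  have hapos : 0 < ι (aelm n) := by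
    show (0:ℝ) < ((((n:ℚ)+2)⁻¹ : ℚ):ℝ)
    have : (0:ℚ) < ((n:ℚ)+2)⁻¹ := by positivity
    exact_mod_cast this
  have haz : aelm n ≠ z := by
    intro h
    rw [h] at hapos
    simp [hz, ι] at hapos
  have hmem : aelm n ∈ U := by
    apply hball
    rw [Metric.mem_ball, dist_eq]
    simp only [hz]
    have : ι z = 0 := by simp [ι, hz]
    rw [this, sub_zero, abs_of_pos hapos]
    exact hsmall
  exact haz (hUS ⟨hmem, hsub haA'⟩)

lemma part2 : ¬ (∀ A B : Set XX, A.Infinite → B.Infinite →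
    LinkedG (homeoSubgroup XX) A B) := by
  intro h
  rcases h Aset Bset Aset_infinite Bset_infinite with ⟨hfin, -⟩ |
    ⟨A', hA'A, B', hB'B, hA'i, hB'i, E, ⟨hdiag, F, h1F, hFG, hEF⟩, hAB, hBA⟩
  · exact Aset_infinite hfin
  · have hdisc : Disc (ball E B') := by
      apply Disc.mono (disc_biUnion F B' (disc_Bset.mono hB'B) hFG)
      rintro y ⟨b, hb, hbE⟩
      obtain ⟨g, hgF, hy⟩ := hEF hbE
      exact Set.mem_biUnion hgF ⟨b, hb, hy.symm⟩
    exact key_no_disc _ hdisc A' hA'A hA'i hAB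

end S18

namespace S18
open Filter Topology Set

lemma seq_rec {β : Type*} (P : β → Prop) (R : β → β → Prop) (x0 : β) (h0 : P x0)
    (h : ∀ x, P x → ∃ y, P y ∧ R x y) :
    ∃ f : ℕ → β, (∀ n, P (f n)) ∧ ∀ n, R (f n) (f (n+1)) := by
  have F : ∀ p : {x : β // P x}, {x : β // P x ∧ R p.1 x} :=
    fun p => ⟨(h p.1 p.2).choose, (h p.1 p.2).choose_spec⟩
  let f' : ℕ → {x : β // P x} := fun n => Nat.rec ⟨x0, h0⟩ (fun _ p => ⟨(F p).1, (F p).2.1⟩) n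
  refine ⟨fun n => (f' n).1, fun n => (f' n).2, fun n => ?_⟩
  exact (F (f' n)).2.2

def pr (j : ℕ) : ℕ := if j % 2 = 0 then j + 1 else j - 1

lemma pr_pr (j : ℕ) : pr (pr j) = j := by
  simp only [pr]; split <;> split <;> omega

lemma pr_div (j : ℕ) : pr j / 2 = j / 2 := by
  simp only [pr]; split <;> omega

lemma pr_ne (j : ℕ) : pr j ≠ j := by
  simp only [pr]; split <;> omega

lemma pr_ge {j J : ℕ} (h : J + 1 ≤ j) : J ≤ pr j := by
  simp only [pr]; split <;> omega

lemma pr_even (k : ℕ) : pr (2*k) = 2*k+1 := by simp only [pr]; split <;> omega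

section Swap

variable (t : ℕ → XX) (r : ℝ) (q : ℕ → ℚ)

noncomputable def sg (j : ℕ) : ℝ := (q (j/2) : ℝ) / Real.sqrt 2

def dd (j : ℕ) : ℚ := ((t (pr j) : ℚ)) - ((t j : ℚ))

def Good : Prop :=
  (∀ n, |ι (t (n+1)) - r| < |ι (t n) - r| / 4) ∧
  (∀ n, 0 < |ι (t n) - r|) ∧
  (∀ k, 0 < q k) ∧
  (∀ j, (q (j/2) : ℝ) ≤ |ι (t j) - r| / 4) ∧
  (∀ j, (q (j/2) : ℝ) ≤ ι (t j) / 4) ∧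
  (∀ j, (q (j/2) : ℝ) ≤ (1 - ι (t j)) / 4)

lemma sqrt2_pos : (0:ℝ) < Real.sqrt 2 := by positivity

variable {t r q} (hG : Good t r q)
include hG

lemma sg_pos (j : ℕ) : 0 < sg q j := by
  unfold sg
  exact div_pos (by exact_mod_cast hG.2.2.1 (j/2)) sqrt2_pos

lemma sg_le_q (j : ℕ) : sg q j ≤ (q (j/2) : ℝ) := by
  unfold sg
  rw [div_le_iff₀ sqrt2_pos]
  nlinarith [sqrt2_gt, (hG.2.2.1 (j/2)), (show (0:ℝ) < (q (j/2):ℝ) by exact_mod_cast hG.2.2.1 (j/2))]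

lemma sg_le_E (j : ℕ) : sg q j ≤ |ι (t j) - r| / 4 :=
  le_trans (sg_le_q hG j) (hG.2.2.2.1 j)

omit hG in
lemma sg_pr (j : ℕ) : sg q (pr j) = sg q j := by unfold sg; rw [pr_div]

lemma E_anti : ∀ {i j : ℕ}, i < j → |ι (t j) - r| < |ι (t i) - r| / 4 := by
  intro i j hij
  induction j with
  | zero => omega
  | succ n ih =>
    rcases Nat.lt_succ_iff_lt_or_eq.mp hij with h | h
    · have h1 := ih h
      have h2 := hG.1 n
      have h3 := hG.2.1 n
      linarith
    · subst h; exact hG.1 i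

lemma E_mono : ∀ {i j : ℕ}, i ≤ j → |ι (t j) - r| ≤ |ι (t i) - r| := by
  intro i j hij
  rcases eq_or_lt_of_le hij with h | h
  · subst h; exact le_refl _
  · have := E_anti hG h
    have := hG.2.1 i
    linarith

lemma T_sep : ∀ {i j : ℕ}, i ≠ j → sg q i + sg q j < |ι (t i) - ι (t j)| := by
  have key : ∀ {i j : ℕ}, i < j → sg q i + sg q j < |ι (t i) - ι (t j)| := by
    intro i j hij
    have h1 := E_anti hG hij
    have h2 := sg_le_E hG i
    have h3 := sg_le_E hG j
    have h4 : |ι (t i) - r| - |ι (t j) - r| ≤ |ι (t i) - ι (t j)| := by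
      have := abs_sub_abs_le_abs_sub (ι (t i) - r) (ι (t j) - r)
      have he : (ι (t i) - r) - (ι (t j) - r) = ι (t i) - ι (t j) := by ring
      rwa [he] at this
    have h5 := hG.2.1 i
    linarith
  intro i j hij
  rcases lt_or_gt_of_ne hij with h | h
  · exact key h
  · rw [abs_sub_comm]; linarith [key h]

lemma uniq {i j : ℕ} {x : XX} (hi : |ι x - ι (t i)| < sg q i)
    (hj : |ι x - ι (t j)| < sg q j) : i = j := by
  by_contra hne
  have h1 := T_sep hG hne
  have h2 : |ι (t i) - ι (t j)| ≤ |ι (t i) - ι x| + |ι x - ι (t j)| := abs_sub_le _ _ _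
  rw [abs_sub_comm (ι (t i)) (ι x)] at h2
  linarith

lemma mem_pf {j : ℕ} {x : XX} (h : |ι x - ι (t j)| < sg q j) :
    (x : ℚ) + dd t j ∈ Set.Icc (0:ℚ) 1 := by
  have hval : (((x:ℚ) + dd t j : ℚ) : ℝ) = ι x + (ι (t (pr j)) - ι (t j)) := by
    unfold dd ι
    push_cast
    ring
  have h1 : |(ι x + (ι (t (pr j)) - ι (t j))) - ι (t (pr j))| < sg q (pr j) := by
    rw [sg_pr]
    have he : (ι x + (ι (t (pr j)) - ι (t j))) - ι (t (pr j)) = ι x - ι (t j) := by ring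
    rwa [he]
  have h2 : sg q (pr j) ≤ ι (t (pr j)) / 4 := le_trans (sg_le_q hG _) (hG.2.2.2.2.1 (pr j))
  have h3 : sg q (pr j) ≤ (1 - ι (t (pr j))) / 4 := le_trans (sg_le_q hG _) (hG.2.2.2.2.2 (pr j))
  have h4 := sg_pos hG (pr j)
  have h5 := abs_lt.mp h1
  constructor
  · have : (0:ℝ) < ((x:ℚ) + dd t j : ℚ) := by rw [hval]; linarith [h5.1]
    exact_mod_cast le_of_lt this
  · have : (((x:ℚ) + dd t j : ℚ) : ℝ) < 1 := by rw [hval]; linarith [h5.2]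
    exact_mod_cast le_of_lt this

open Classical in
noncomputable def sw : XX → XX := fun x =>
  if h : ∃ j, |ι x - ι (t j)| < sg q j then
    ⟨(x : ℚ) + dd t h.choose, mem_pf hG h.choose_spec⟩
  else x

lemma sw_eq_of_mem {j : ℕ} {x : XX} (h : |ι x - ι (t j)| < sg q j) :
    sw hG x = ⟨(x : ℚ) + dd t j, mem_pf hG h⟩ := by
  unfold sw
  rw [dif_pos ⟨j, h⟩]
  have hcj : (⟨j, h⟩ : ∃ j, |ι x - ι (t j)| < sg q j).choose = j :=
    uniq hG (Exists.choose_spec (⟨j, h⟩ : ∃ j, |ι x - ι (t j)| < sg q j)) h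
  exact Subtype.ext (congrArg (fun i => (x:ℚ) + dd t i) hcj)

lemma sw_eq_of_not {x : XX} (h : ¬ ∃ j, |ι x - ι (t j)| < sg q j) : sw hG x = x := by
  unfold sw
  rw [dif_neg h]

lemma sw_mem_pr {j : ℕ} {x : XX} (h : |ι x - ι (t j)| < sg q j) :
    |ι (sw hG x) - ι (t (pr j))| < sg q (pr j) := by
  rw [sw_eq_of_mem hG h, sg_pr]
  have hval : ι (⟨(x : ℚ) + dd t j, mem_pf hG h⟩ : XX) = ι x + (ι (t (pr j)) - ι (t j)) := by
    unfold dd ι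
    push_cast
    ring
  rw [hval]
  have he : (ι x + (ι (t (pr j)) - ι (t j))) - ι (t (pr j)) = ι x - ι (t j) := by ring
  rwa [he]

lemma sw_invol : Function.Involutive (sw hG) := by
  intro x
  by_cases h : ∃ j, |ι x - ι (t j)| < sg q j
  · obtain ⟨j, hj⟩ := h
    have h2 := sw_mem_pr hG hj
    apply Subtype.ext
    rw [sw_eq_of_mem hG h2]
    show ((sw hG x : XX) : ℚ) + dd t (pr j) = (x : ℚ)
    rw [sw_eq_of_mem hG hj]
    show (x : ℚ) + dd t j + dd t (pr j) = (x : ℚ)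
    have hdd : dd t (pr j) = - dd t j := by
      unfold dd
      rw [pr_pr]
      ring
    rw [hdd]
    ring
  · rw [sw_eq_of_not hG h, sw_eq_of_not hG h]

end Swap
end S18

namespace S18
open Filter Topology Set

section Swap2
variable {t : ℕ → XX} {r : ℝ} {q : ℕ → ℚ} (hG : Good t r q)
include hG

lemma ne_sg (j : ℕ) (x : XX) : |ι x - ι (t j)| ≠ sg q j := by
  intro he
  have hc : |ι x - ι (t j)| = ((|(x:ℚ) - ((t j : ℚ))| : ℚ) : ℝ) := by
    unfold ι; push_cast; ring
  have hgt : (0:ℝ) < ((|(x:ℚ) - ((t j : ℚ))| : ℚ) : ℝ) := by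
    rw [← hc, he]; exact sg_pos hG j
  have hne : ((|(x:ℚ) - ((t j : ℚ))| : ℚ) : ℝ) ≠ 0 := ne_of_gt hgt
  have h2 : ((|(x:ℚ) - ((t j:ℚ))| : ℚ) : ℝ) = (q (j/2) : ℝ) / Real.sqrt 2 := by
    rw [← hc, he]; rfl
  apply irrational_sqrt_two
  refine ⟨q (j/2) / |(x:ℚ) - ((t j : ℚ))|, ?_⟩
  rw [Rat.cast_div, div_eq_iff hne, h2]
  rw [mul_comm, div_mul_cancel₀ _ (ne_of_gt sqrt2_pos)]

lemma E_decay : ∀ n, |ι (t n) - r| ≤ |ι (t 0) - r| / 4 ^ n := by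
  intro n
  induction n with
  | zero => simp
  | succ n ih =>
    have h1 := hG.1 n
    have h2 : |ι (t 0) - r| / 4 ^ (n+1) = (|ι (t 0) - r| / 4 ^ n) / 4 := by
      rw [pow_succ]; ring
    rw [h2]
    have h3 : |ι (t n) - r| / 4 ≤ (|ι (t 0) - r| / 4 ^ n) / 4 := by linarith
    linarith

lemma E_small (ε : ℝ) (hε : 0 < ε) : ∃ J, |ι (t J) - r| < ε := by
  obtain ⟨n, hn⟩ := pow_unbounded_of_one_lt (|ι (t 0) - r| / ε) (by norm_num : (1:ℝ) < 4)
  refine ⟨n, lt_of_le_of_lt (E_decay hG n) ?_⟩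
  rw [div_lt_iff₀ (by positivity)]
  rw [div_lt_iff₀ hε] at hn
  linarith

lemma sw_cont : Continuous (sw hG) := by
  rw [continuous_iff_continuousAt]
  intro x₀
  rw [Metric.continuousAt_iff]
  intro ε hε
  by_cases h0 : ∃ j, |ι x₀ - ι (t j)| < sg q j
  · obtain ⟨j, hj⟩ := h0
    have hopen : IsOpen {x : XX | |ι x - ι (t j)| < sg q j} :=
      isOpen_lt ((continuous_ι.sub continuous_const).abs) continuous_const
    obtain ⟨δ₁, hδ₁, hb⟩ := Metric.isOpen_iff.mp hopen x₀ hj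
    refine ⟨min δ₁ ε, lt_min hδ₁ hε, ?_⟩
    intro x hx
    have hxj : |ι x - ι (t j)| < sg q j :=
      hb (Metric.mem_ball.mpr (lt_of_lt_of_le hx (min_le_left _ _)))
    have hd : dist (sw hG x) (sw hG x₀) = dist x x₀ := by
      rw [sw_eq_of_mem hG hxj, sw_eq_of_mem hG hj, Subtype.dist_eq, Subtype.dist_eq]
      show dist ((x:ℚ) + dd t j) ((x₀:ℚ) + dd t j) = dist (x:ℚ) (x₀:ℚ)
      rw [Rat.dist_eq, Rat.dist_eq]
      push_cast
      congr 1
      ring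
    rw [hd]
    exact lt_of_lt_of_le hx (min_le_right _ _)
  · push_neg at h0
    have hx₀ : sw hG x₀ = x₀ := sw_eq_of_not hG (by push_neg; exact h0)
    obtain ⟨J, hJ⟩ := E_small hG (ε/8) (by linarith)
    have hcl : ∀ j, ∃ δ, 0 < δ ∧ ∀ x : XX, dist x x₀ < δ → sg q j ≤ |ι x - ι (t j)| := by
      intro j
      have hlt : sg q j < |ι x₀ - ι (t j)| :=
        lt_of_le_of_ne (h0 j) (Ne.symm (ne_sg hG j x₀))
      refine ⟨|ι x₀ - ι (t j)| - sg q j, by linarith, fun x hx => ?_⟩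
      rw [dist_eq] at hx
      have tri : |ι x₀ - ι (t j)| ≤ |ι x₀ - ι x| + |ι x - ι (t j)| := abs_sub_le _ _ _
      rw [abs_sub_comm (ι x₀) (ι x)] at tri
      linarith
    choose δf hδf hvf using hcl
    have hne : (Finset.range (J+1)).Nonempty := ⟨0, Finset.mem_range.mpr (by omega)⟩
    set δ₂ := (Finset.range (J+1)).inf' hne δf with hδ₂
    have hδ₂pos : 0 < δ₂ := by
      rw [hδ₂, Finset.lt_inf'_iff]
      exact fun j _ => hδf j
    refine ⟨min δ₂ (ε/2), lt_min hδ₂pos (by linarith), ?_⟩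
    intro x hx
    rw [hx₀]
    by_cases hx' : ∃ j, |ι x - ι (t j)| < sg q j
    · obtain ⟨j, hjx⟩ := hx'
      have hjJ : J + 1 ≤ j := by
        by_contra hc
        push_neg at hc
        have h1 := hvf j x (lt_of_lt_of_le hx
          (le_trans (min_le_left _ _) (Finset.inf'_le δf (Finset.mem_range.mpr hc))))
        linarith
      have hEj : |ι (t j) - r| ≤ |ι (t J) - r| := E_mono hG (by omega)
      have hEpj : |ι (t (pr j)) - r| ≤ |ι (t J) - r| := E_mono hG (pr_ge hjJ)
      have hxr : |ι x - r| ≤ (5/4) * |ι (t j) - r| := by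
        have tri : |ι x - r| ≤ |ι x - ι (t j)| + |ι (t j) - r| := abs_sub_le _ _ _
        have := sg_le_E hG j
        linarith
      have hswr : |ι (sw hG x) - r| ≤ (5/4) * |ι (t (pr j)) - r| := by
        have h2 := sw_mem_pr hG hjx
        have tri : |ι (sw hG x) - r| ≤ |ι (sw hG x) - ι (t (pr j))| + |ι (t (pr j)) - r| :=
          abs_sub_le _ _ _
        have := sg_le_E hG (pr j)
        linarith
      rw [dist_eq]
      have hxx₀ : |ι x - ι x₀| < ε/2 := by
        rw [← dist_eq]
        exact lt_of_lt_of_le hx (min_le_right _ _)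
      have tri2 : |ι (sw hG x) - ι x₀| ≤ |ι (sw hG x) - r| + |ι x - r| + |ι x - ι x₀| := by
        have t1 : |ι (sw hG x) - ι x₀| ≤ |ι (sw hG x) - r| + |r - ι x₀| := abs_sub_le _ _ _
        have t2 : |r - ι x₀| ≤ |r - ι x| + |ι x - ι x₀| := abs_sub_le _ _ _
        have t3 : |r - ι x| = |ι x - r| := abs_sub_comm _ _
        linarith
      linarith
    · rw [sw_eq_of_not hG hx']
      have : dist x x₀ < ε/2 := lt_of_lt_of_le hx (min_le_right _ _)
      linarith

end Swap2
end S18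

namespace S18
open Filter Topology Set

theorem part1 : ∀ A : Set XX, A.Infinite → ¬ IsThin (homeoSubgroup XX) A := by
  classical
  intro A hA hthin
  let emb := hA.natEmbedding
  set c : ℕ → XX := fun n => (emb n : XX) with hc
  have hcA : ∀ n, c n ∈ A := fun n => (emb n).2
  have hcinj : Function.Injective c := by
    intro n m h
    exact emb.injective (Subtype.ext h)
  have hmem : ∀ n, ι (c n) ∈ Set.Icc (0:ℝ) 1 := by
    intro n
    have h1 := (c n).2
    refine ⟨?_, ?_⟩
    · show (0:ℝ) ≤ ((c n : ℚ) : ℝ); exact_mod_cast h1.1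
    · show ((c n : ℚ) : ℝ) ≤ 1; exact_mod_cast h1.2
  obtain ⟨r, hrI, φ, hφ, hconv⟩ :=
    (isCompact_Icc (a := (0:ℝ)) (b := 1)).tendsto_subseq hmem
  have hnext : ∀ δ : ℝ, 0 < δ →
      ∃ x : XX, (x ∈ A ∧ 0 < |ι x - r| ∧ 0 < ι x ∧ ι x < 1) ∧ |ι x - r| < δ := by
    intro δ hδ
    obtain ⟨N, hN⟩ := Metric.tendsto_atTop.mp hconv δ hδ
    have hbadfin : {n : ℕ | ι (c (φ n)) = r ∨ ι (c (φ n)) = 0 ∨ ι (c (φ n)) = 1}.Finite := by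
      have hinj : Function.Injective fun n => ι (c (φ n)) :=
        ι_inj.comp (hcinj.comp hφ.injective)
      have hsub : {n : ℕ | ι (c (φ n)) = r ∨ ι (c (φ n)) = 0 ∨ ι (c (φ n)) = 1} ⊆
          (fun n => ι (c (φ n))) ⁻¹' {r, 0, 1} := by
        intro n hn
        simpa using hn
      exact Set.Finite.subset (Set.Finite.preimage hinj.injOn (by simp)) hsub
    obtain ⟨b, hb⟩ := hbadfin.bddAbove
    set n := max N (b+1) with hn
    have hnotbad : ¬ (ι (c (φ n)) = r ∨ ι (c (φ n)) = 0 ∨ ι (c (φ n)) = 1) := by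
      intro hbad
      have := hb hbad
      omega
    push_neg at hnotbad
    obtain ⟨hr1, hr2, hr3⟩ := hnotbad
    have hdist : |ι (c (φ n)) - r| < δ := by
      have := hN n (le_max_left _ _)
      rwa [Real.dist_eq] at this
    refine ⟨c (φ n), ⟨hcA _, abs_pos.mpr (sub_ne_zero.mpr hr1), ?_, ?_⟩, hdist⟩
    · exact lt_of_le_of_ne (hmem (φ n)).1 (Ne.symm hr2)
    · exact lt_of_le_of_ne (hmem (φ n)).2 hr3
  obtain ⟨x0, hx0, -⟩ := hnext 1 one_pos
  obtain ⟨t, htP, htR⟩ := seq_rec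
    (fun x : XX => x ∈ A ∧ 0 < |ι x - r| ∧ 0 < ι x ∧ ι x < 1)
    (fun x y => |ι y - r| < |ι x - r| / 4) x0 hx0
    (fun x hx => by
      obtain ⟨y, hy1, hy2⟩ := hnext (|ι x - r| / 4) (by linarith [hx.2.1])
      exact ⟨y, hy1, hy2⟩)
  -- the per-index bound
  have hm : ∀ j : ℕ, (0:ℝ) <
      min (min (|ι (t j) - r| / 4) (ι (t j) / 4)) ((1 - ι (t j)) / 4) := by
    intro j
    have h := htP j
    refine lt_min (lt_min ?_ ?_) ?_ <;> linarith [h.2.1, h.2.2.1, h.2.2.2]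
  have hqex : ∀ k : ℕ, ∃ qq : ℚ, (0:ℝ) < qq ∧ (qq:ℝ) <
      min (min (min (|ι (t (2*k)) - r| / 4) (ι (t (2*k)) / 4)) ((1 - ι (t (2*k))) / 4))
          (min (min (|ι (t (2*k+1)) - r| / 4) (ι (t (2*k+1)) / 4)) ((1 - ι (t (2*k+1))) / 4)) := by
    intro k
    exact exists_rat_btwn (lt_min (hm (2*k)) (hm (2*k+1)))
  choose q hq0 hqlt using hqex
  have hb : ∀ j : ℕ, (q (j/2) : ℝ) <
      min (min (|ι (t j) - r| / 4) (ι (t j) / 4)) ((1 - ι (t j)) / 4) := by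
    intro j
    rcases Nat.even_or_odd j with ⟨k, hk⟩ | ⟨k, hk⟩
    · have hdiv : j / 2 = k := by omega
      have h2k : 2 * k = j := by omega
      have h := hqlt k
      rw [h2k] at h
      rw [hdiv]
      exact lt_of_lt_of_le h (min_le_left _ _)
    · have hdiv : j / 2 = k := by omega
      have h2k : 2 * k + 1 = j := by omega
      have h := hqlt k
      rw [h2k] at h
      rw [hdiv]
      exact lt_of_lt_of_le h (min_le_right _ _)
  have hG : Good t r q := by
    refine ⟨htR, fun n => (htP n).2.1, fun k => by exact_mod_cast hq0 k, ?_, ?_, ?_⟩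
    · intro j
      exact le_of_lt (lt_of_lt_of_le (hb j) (le_trans (min_le_left _ _) (min_le_left _ _)))
    · intro j
      exact le_of_lt (lt_of_lt_of_le (hb j) (le_trans (min_le_left _ _) (min_le_right _ _)))
    · intro j
      exact le_of_lt (lt_of_lt_of_le (hb j) (min_le_right _ _))
  -- the homeomorphism
  let g : Equiv.Perm XX := Function.Involutive.toPerm _ (sw_invol hG)
  have hgcoe : ⇑g = sw hG := rfl
  have hgsymm : ⇑g.symm = sw hG := rfl
  have hgmem : g ∈ homeoSubgroup XX :=
    ⟨by rw [hgcoe]; exact sw_cont hG, by rw [hgsymm]; exact sw_cont hG⟩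
  have hmove : ∀ k, g (t (2*k)) = t (2*k+1) := by
    intro k
    have hmk : |ι (t (2*k)) - ι (t (2*k))| < sg q (2*k) := by
      rw [sub_self, abs_zero]; exact sg_pos hG _
    rw [hgcoe, sw_eq_of_mem hG hmk]
    apply Subtype.ext
    show ((t (2*k)) : ℚ) + dd t (2*k) = ((t (2*k+1)) : ℚ)
    unfold dd
    rw [pr_even]
    ring
  have htinj : Function.Injective t := by
    intro i j hij
    by_contra hne
    rcases lt_or_gt_of_ne hne with h | h
    · have h1 := E_anti hG h
      rw [hij] at h1
      linarith [hG.2.1 i, hG.2.1 j]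
    · have h1 := E_anti hG h
      rw [hij] at h1
      linarith [hG.2.1 i, hG.2.1 j]
  set F : Finset (Equiv.Perm XX) := {1, g} with hF
  have hEmem : entourage (↑F : Set (Equiv.Perm XX)) ∈ XGsets (homeoSubgroup XX) := by
    refine ⟨fun x => ⟨1, by simp [hF], by simp⟩, F, by simp [hF], ?_, subset_rfl⟩
    intro h hh
    simp only [hF, Finset.coe_insert, Finset.coe_singleton, Set.mem_insert_iff,
      Set.mem_singleton_iff] at hh
    rcases hh with rfl | rfl
    · exact Subgroup.one_mem _
    · exact hgmem
  obtain ⟨B, hBfin, hB⟩ := hthin _ hEmem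
  have hrng : (Set.range fun k => t (2*k)).Infinite :=
    Set.infinite_range_of_injective (htinj.comp (fun a b h => by omega))
  obtain ⟨a, ⟨k, rfl⟩, haB⟩ := (hrng.diff hBfin).nonempty
  have h2 := hB (t (2*k)) ⟨(htP (2*k)).1, haB⟩
  have h3 : g (t (2*k)) ∈ _root_.ball (entourage (↑F : Set (Equiv.Perm XX))) {t (2*k)} ∩ A := by
    refine ⟨⟨t (2*k), Set.mem_singleton _, ⟨g, by simp [hF], rfl⟩⟩, ?_⟩
    rw [hmove k]
    exact (htP (2*k+1)).1
  rw [h2] at h3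
  have h4 : t (2*k+1) = t (2*k) := by rw [← hmove k]; exact h3
  have := htinj h4
  omega

end S18


/-- For `X` the rationals of `[0,1]` and `G` the group of all
homeomorphisms of `X`, the finitary coarse space `X_G` is indiscrete but not
λ-tight. -/
theorem rationals_indiscrete_not_lambdaTight :
    (∀ A : Set ↥(Set.Icc (0 : ℚ) 1), A.Infinite →
        ¬ IsThin (homeoSubgroup ↥(Set.Icc (0 : ℚ) 1)) A) ∧
    ¬ (∀ A B : Set ↥(Set.Icc (0 : ℚ) 1), A.Infinite → B.Infinite →
        LinkedG (homeoSubgroup ↥(Set.Icc (0 : ℚ) 1)) A B) := by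
  exact ⟨S18.part1, S18.part2⟩
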